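/- Let k ≥ 1 be an integer, N > 1, Q ≥ 1 and γ > 0, and let M_{k,N} = exp^{(k)}(2N)·(exp^{(k−1)}(2N))²·(exp^{(k−2)}(2N))²⋯(exp(2N))²·(2N)². Suppose (b_j)_{j ≥ 0} is a sequence of real numbers such that, for every j ≥ 0 satisfying b_j > 2·ln κ_{k,N}(j+2) + ln γ + ln M_{k,N}, one has b_{j+1} ≥ b_j − 2·ln κ_{k,N}(j+2) − 2·ln Q + 2·∑_{i=1}^{k−1} ln^{(i)}(b_j − 2·ln κ_{k,N}(j+2) − ln γ) + 2N·ln^{(k)}(b_j − 2·ln κ_{k,N}(j+2) − ln γ). Then there exist constants A, C′ > 0 depending only on k and N such that, whenever b₀ ≥ exp^{(k−1)}(A·Q^{2/(N−1)}) + ln γ + C′, it holds for every j ≥ 0 that b_j ≥ b₀ + 2j and b_j > 2·ln κ_{k,N}(j+2) + ln γ + ln M_{k,N}. -/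

import Mathlib

/-- `κ_{k,N}(j) = j²` if `j ≤ exp^[k](2N)`, and
`κ_{k,N}(j) = j·(ln j)·(ln^[2] j)⋯(ln^[k-2] j)·(ln^[k-1] j)^((N+1)/2)` if `j > exp^[k](2N)`. -/
noncomputable def kappa (k : ℕ) (N : ℝ) (j : ℕ) : ℝ :=
  if (j : ℝ) ≤ Real.exp^[k] (2 * N) then (j : ℝ) ^ 2
  else (∏ i ∈ Finset.range (k - 1), Real.log^[i] (j : ℝ)) *
    (Real.log^[k - 1] (j : ℝ)) ^ ((N + 1) / 2)

/-- `M_{k,N} = exp^[k](2N)·(exp^[k-1](2N))²·(exp^[k-2](2N))²⋯(exp(2N))²·(2N)²`. -/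
noncomputable def Mconst (k : ℕ) (N : ℝ) : ℝ :=
  Real.exp^[k] (2 * N) * ∏ i ∈ Finset.range k, (Real.exp^[i] (2 * N)) ^ 2

private lemma expIter_pos {t : ℝ} (ht : 0 < t) (m : ℕ) : 0 < Real.exp^[m] t := by
  induction m with
  | zero => simpa using ht
  | succ n ih => rw [Function.iterate_succ_apply']; exact Real.exp_pos _

private lemma logIter_expIter (i m : ℕ) (t : ℝ) :
    Real.log^[i] (Real.exp^[i + m] t) = Real.exp^[m] t := by
  induction i with
  | zero => simp
  | succ n ih =>
    have h1 : Real.exp^[n + 1 + m] t = Real.exp (Real.exp^[n + m] t) := by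
      rw [show n + 1 + m = (n + m) + 1 by omega, Function.iterate_succ_apply']
    rw [h1, Function.iterate_succ_apply, Real.log_exp, ih]

private lemma logIter_mono {a x : ℝ} (m : ℕ) (hpos : ∀ i < m, 0 < Real.log^[i] a)
    (hax : a ≤ x) : Real.log^[m] a ≤ Real.log^[m] x := by
  induction m with
  | zero => simpa using hax
  | succ n ih =>
    rw [Function.iterate_succ_apply', Function.iterate_succ_apply']
    exact Real.log_le_log (hpos n (Nat.lt_succ_self n))
      (ih fun i hi => hpos i (hi.trans (Nat.lt_succ_self n)))

private lemma logIter_expIter_eq {t : ℝ} {m i : ℕ} (him : i ≤ m) :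
    Real.log^[i] (Real.exp^[m] t) = Real.exp^[m - i] t := by
  have := logIter_expIter i (m - i) t
  rwa [show i + (m - i) = m by omega] at this

private lemma expIter_le_logIter {t x : ℝ} (ht : 0 < t) {m i : ℕ} (him : i ≤ m)
    (hx : Real.exp^[m] t ≤ x) : Real.exp^[m - i] t ≤ Real.log^[i] x := by
  have key : Real.log^[i] (Real.exp^[m] t) = Real.exp^[m - i] t := logIter_expIter_eq him
  calc Real.exp^[m - i] t = Real.log^[i] (Real.exp^[m] t) := key.symm
    _ ≤ Real.log^[i] x := by
        refine logIter_mono i (fun i' hi' => ?_) hx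
        rw [logIter_expIter_eq (by omega : i' ≤ m)]
        exact expIter_pos ht _

private lemma logIter_le_log {t : ℝ} (m : ℕ) (hm : 1 ≤ m)
    (hpos : ∀ i < m, 0 < Real.log^[i] t) : Real.log^[m] t ≤ Real.log t := by
  induction m with
  | zero => omega
  | succ n ih =>
    rcases Nat.eq_or_lt_of_le hm with h | h
    · simp [← h]
    · have hn : 1 ≤ n := by omega
      have h1 : Real.log^[n + 1] t = Real.log (Real.log^[n] t) :=
        Function.iterate_succ_apply' _ _ _
      have h2 : 0 < Real.log^[n] t := hpos n (Nat.lt_succ_self n)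
      have h3 := Real.log_le_sub_one_of_pos h2
      have h4 := ih hn (fun i hi => hpos i (by omega))
      linarith [h1.le, h1.ge]

private lemma iterate_succ_pred {f : ℝ → ℝ} {k : ℕ} (hk : 1 ≤ k) (x : ℝ) :
    f^[k] x = f (f^[k - 1] x) := by
  conv_lhs => rw [show k = (k - 1) + 1 by omega]
  rw [Function.iterate_succ_apply']

private lemma kappa_log_eq (k : ℕ) (hk : 1 ≤ k) (N : ℝ) (hN : 1 < N) (j : ℕ)
    (h : Real.exp^[k] (2 * N) < (j : ℝ) + 2) :
    Real.log (kappa k N (j + 2)) =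
      (∑ i ∈ Finset.Ico 1 k, Real.log^[i] ((j : ℝ) + 2)) +
        (N + 1) / 2 * Real.log^[k] ((j : ℝ) + 2) := by
  have hN0 : (0 : ℝ) < 2 * N := by linarith
  have hcast : ((j + 2 : ℕ) : ℝ) = (j : ℝ) + 2 := by push_cast; ring
  have hxE : Real.exp^[k] (2 * N) ≤ (j : ℝ) + 2 := h.le
  have hchain : ∀ i ≤ k, 0 < Real.log^[i] ((j : ℝ) + 2) := fun i hi =>
    lt_of_lt_of_le (expIter_pos hN0 _) (expIter_le_logIter hN0 hi hxE)
  rw [kappa, hcast, if_neg (not_le.mpr h)]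
  rw [Real.log_mul (Finset.prod_ne_zero_iff.mpr fun i hi =>
        ne_of_gt (hchain i (by have := Finset.mem_range.mp hi; omega)))
      (ne_of_gt (Real.rpow_pos_of_pos (hchain (k - 1) (by omega)) _)),
    Real.log_prod (fun i hi =>
        ne_of_gt (hchain i (by have := Finset.mem_range.mp hi; omega))),
    Real.log_rpow (hchain (k - 1) (by omega))]
  have h1 : ∀ i : ℕ, Real.log (Real.log^[i] ((j : ℝ) + 2)) = Real.log^[i + 1] ((j : ℝ) + 2) :=
    fun i => (Function.iterate_succ_apply' _ _ _).symm
  have h2 : Real.log (Real.log^[k - 1] ((j : ℝ) + 2)) = Real.log^[k] ((j : ℝ) + 2) := by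
    rw [h1, show k - 1 + 1 = k by omega]
  rw [h2]
  congr 1
  rw [Finset.sum_Ico_eq_sum_range]
  exact Finset.sum_congr rfl fun i _ => by rw [h1, Nat.add_comm]

private lemma kappa_log_le (k : ℕ) (hk : 1 ≤ k) (N : ℝ) (hN : 1 < N) (j : ℕ) :
    Real.log (kappa k N (j + 2)) ≤ ((k : ℝ) + (N + 1) / 2) * Real.log ((j : ℝ) + 2) := by
  have hN0 : (0 : ℝ) < 2 * N := by linarith
  have hcast : ((j + 2 : ℕ) : ℝ) = (j : ℝ) + 2 := by push_cast; ring
  have hk1 : (1 : ℝ) ≤ (k : ℝ) := by exact_mod_cast hk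
  have hlog0 : 0 ≤ Real.log ((j : ℝ) + 2) :=
    Real.log_nonneg (by have : (0:ℝ) ≤ (j:ℝ) := Nat.cast_nonneg j; linarith)
  by_cases h : ((j : ℝ) + 2) ≤ Real.exp^[k] (2 * N)
  · rw [kappa, hcast, if_pos h, Real.log_pow]
    push_cast
    nlinarith
  · push_neg at h
    rw [kappa_log_eq k hk N hN j h]
    have hxE : Real.exp^[k] (2 * N) ≤ (j : ℝ) + 2 := h.le
    have hchain : ∀ i ≤ k, 0 < Real.log^[i] ((j : ℝ) + 2) := fun i hi =>
      lt_of_lt_of_le (expIter_pos hN0 _) (expIter_le_logIter hN0 hi hxE)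
    have hsum : (∑ i ∈ Finset.Ico 1 k, Real.log^[i] ((j : ℝ) + 2)) ≤
        ((k : ℝ) - 1) * Real.log ((j : ℝ) + 2) := by
      calc (∑ i ∈ Finset.Ico 1 k, Real.log^[i] ((j : ℝ) + 2))
          ≤ ∑ i ∈ Finset.Ico 1 k, Real.log ((j : ℝ) + 2) := by
            refine Finset.sum_le_sum fun i hi => ?_
            obtain ⟨hi1, hi2⟩ := Finset.mem_Ico.mp hi
            exact logIter_le_log i hi1 (fun i' hi' => hchain i' (by omega))
        _ = ((k : ℝ) - 1) * Real.log ((j : ℝ) + 2) := by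
            rw [Finset.sum_const, Nat.card_Ico, nsmul_eq_mul]
            congr 1
            push_cast [Nat.cast_sub hk]
            ring
    have hlk : Real.log^[k] ((j : ℝ) + 2) ≤ Real.log ((j : ℝ) + 2) :=
      logIter_le_log k hk (fun i' hi' => hchain i' (by omega))
    have hlkpos : 0 < Real.log^[k] ((j : ℝ) + 2) := hchain k le_rfl
    nlinarith

set_option maxHeartbeats 1000000 in
/-- the DeGiorgi induction claim: if the sequence `(b_j)` satisfies the
iteration inequality, then there are `A, C′ > 0` depending only on `k` and `N` such that
whenever `b₀ ≥ exp^[k-1](A·Q^(2/(N−1))) + ln γ + C′`, one has `b_j ≥ b₀ + 2j` and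
`b_j > 2·ln κ(j+2) + ln γ + ln M_{k,N}` for all `j ≥ 0`. -/
theorem deGiorgi_induction_claim
    (k : ℕ) (hk : 1 ≤ k) (N : ℝ) (hN : 1 < N) :
    ∃ A : ℝ, 0 < A ∧ ∃ C' : ℝ, 0 < C' ∧
    ∀ Q : ℝ, 1 ≤ Q → ∀ γ : ℝ, 0 < γ →
    ∀ b : ℕ → ℝ,
    (∀ j : ℕ,
      b j > 2 * Real.log (kappa k N (j + 2)) + Real.log γ + Real.log (Mconst k N) →
      b (j + 1) ≥ b j - 2 * Real.log (kappa k N (j + 2)) - 2 * Real.log Q +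
        2 * ∑ i ∈ Finset.Ico 1 k,
          Real.log^[i] (b j - 2 * Real.log (kappa k N (j + 2)) - Real.log γ) +
        2 * N * Real.log^[k] (b j - 2 * Real.log (kappa k N (j + 2)) - Real.log γ)) →
    b 0 ≥ Real.exp^[k - 1] (A * Q ^ (2 / (N - 1))) + Real.log γ + C' →
    ∀ j : ℕ,
      b j ≥ b 0 + 2 * j ∧
      b j > 2 * Real.log (kappa k N (j + 2)) + Real.log γ + Real.log (Mconst k N) := by
  have hN0 : (0 : ℝ) < 2 * N := by linarith
  have hk1 : (1 : ℝ) ≤ (k : ℝ) := by exact_mod_cast hk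
  set c : ℝ := (k : ℝ) + (N + 1) / 2 with hc_def
  clear_value c
  have hc2 : (2 : ℝ) ≤ c := by rw [hc_def]; linarith
  have hc0 : (0 : ℝ) < c := by linarith
  set K : ℝ := 1 / 2 + 2 * c * Real.log (8 * c) with hK_def
  clear_value K
  have hK0 : (0 : ℝ) < K := by
    have h8 : (0 : ℝ) < Real.log (8 * c) := Real.log_pos (by linarith)
    rw [hK_def]; nlinarith
  set D : ℝ := 4 * Real.exp^[k - 1] (2 * N) with hD_def
  clear_value D
  have hE1 : (0 : ℝ) < Real.exp^[k - 1] (2 * N) := expIter_pos hN0 _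
  have hD0 : (0 : ℝ) < D := by rw [hD_def]; linarith
  have hM0 : (0 : ℝ) < Mconst k N := by
    rw [Mconst]
    exact mul_pos (expIter_pos hN0 k)
      (Finset.prod_pos fun i _ => pow_pos (expIter_pos hN0 i) 2)
  have hED0 : (0 : ℝ) < Real.exp^[k] D := expIter_pos hD0 k
  have htan : ∀ j : ℕ, 2 * c * Real.log ((j : ℝ) + 2) ≤ (j : ℝ) / 4 + K := by
    intro j
    have hj0 : (0 : ℝ) ≤ (j : ℝ) := Nat.cast_nonneg j
    have hu : Real.log (((j : ℝ) + 2) / (8 * c)) ≤ ((j : ℝ) + 2) / (8 * c) - 1 :=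
      Real.log_le_sub_one_of_pos (by positivity)
    rw [Real.log_div (by linarith) (by positivity)] at hu
    have hmul := mul_le_mul_of_nonneg_left hu (by linarith : (0 : ℝ) ≤ 2 * c)
    have heq : 2 * c * (((j : ℝ) + 2) / (8 * c) - 1) = ((j : ℝ) + 2) / 4 - 2 * c := by
      field_simp
      ring
    rw [heq] at hmul
    rw [hK_def]
    linarith
  have hkapb : ∀ j : ℕ, 2 * Real.log (kappa k N (j + 2)) ≤ (j : ℝ) / 4 + K := by
    intro j
    have h1 := kappa_log_le k hk N hN j
    rw [← hc_def] at h1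
    have h2 := htan j
    linarith
  refine ⟨Real.exp (2 / (N - 1)), Real.exp_pos _,
    K + Real.exp^[k] D + Mconst k N + 3, by linarith, ?_⟩
  intro Q hQ γ hγ b hb hb0
  have hQ0 : (0 : ℝ) < Q := by linarith
  set P : ℝ := Real.exp (2 / (N - 1)) * Q ^ (2 / (N - 1)) with hP_def
  clear_value P
  have hP0 : (0 : ℝ) < P := by
    rw [hP_def]; exact mul_pos (Real.exp_pos _) (Real.rpow_pos_of_pos hQ0 _)
  have hEP0 : (0 : ℝ) < Real.exp^[k - 1] P := expIter_pos hP0 _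
  have hlogM : Real.log (Mconst k N) ≤ Mconst k N - 1 := Real.log_le_sub_one_of_pos hM0
  have hthresh : ∀ j : ℕ, b j ≥ b 0 + 2 * (j : ℝ) →
      b j > 2 * Real.log (kappa k N (j + 2)) + Real.log γ + Real.log (Mconst k N) := by
    intro j hbj
    have h1 := hkapb j
    have hj0 : (0 : ℝ) ≤ (j : ℝ) := Nat.cast_nonneg j
    linarith
  have main : ∀ j : ℕ, b j ≥ b 0 + 2 * (j : ℝ) := by
    intro j
    induction j with
    | zero => simp
    | succ n ih =>
      have hn0 : (0 : ℝ) ≤ (n : ℝ) := Nat.cast_nonneg n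
      have hth := hthresh n ih
      have hstep := hb n hth
      set x : ℝ := b n - 2 * Real.log (kappa k N (n + 2)) - Real.log γ with hx_def
      clear_value x
      have hxlow : Real.exp^[k - 1] P + (Real.exp^[k] D + Mconst k N + 3) +
          7 * (n : ℝ) / 4 ≤ x := by
        have h1 := hkapb n
        rw [hx_def]
        linarith
      have hx1 : Real.exp^[k - 1] P ≤ x := by linarith
      have hx2 : Real.exp^[k] D ≤ x := by linarith
      have hx3 : (n : ℝ) + 2 ≤ x := by linarith
      -- part (a): (N-1) * log^[k] x ≥ 2 log Q + 2
      have hL : Real.log P ≤ Real.log^[k] x := by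
        have h1 : P ≤ Real.log^[k - 1] x := by
          have := expIter_le_logIter hP0 (le_refl (k - 1)) hx1
          simpa using this
        rw [iterate_succ_pred hk x]
        exact Real.log_le_log hP0 h1
      have hlogP : Real.log P = 2 / (N - 1) + 2 / (N - 1) * Real.log Q := by
        rw [hP_def, Real.log_mul (ne_of_gt (Real.exp_pos _))
          (ne_of_gt (Real.rpow_pos_of_pos hQ0 _)), Real.log_exp, Real.log_rpow hQ0]
      have hN1 : N - 1 ≠ 0 := by intro h; linarith
      have ha : 2 * Real.log Q + 2 ≤ (N - 1) * Real.log^[k] x := by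
        have h1 : (N - 1) * Real.log P ≤ (N - 1) * Real.log^[k] x :=
          mul_le_mul_of_nonneg_left hL (by linarith)
        have h2 : (N - 1) * Real.log P = 2 + 2 * Real.log Q := by
          rw [hlogP]; field_simp
        linarith
      -- part (b): 2 log κ(n+2) ≤ 2 Σ + (N+1) log^[k] x
      have hSnn : ∀ i ∈ Finset.Ico 1 k, 0 ≤ Real.log^[i] x := by
        intro i hi
        obtain ⟨hi1, hi2⟩ := Finset.mem_Ico.mp hi
        have h1 := expIter_le_logIter hD0 hi2.le hx2
        have h2 := expIter_pos hD0 (k - i)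
        linarith
      have hLk : D ≤ Real.log^[k] x := by
        have := expIter_le_logIter hD0 (le_refl k) hx2
        simpa using this
      have hbb : 2 * Real.log (kappa k N (n + 2)) ≤
          2 * (∑ i ∈ Finset.Ico 1 k, Real.log^[i] x) + (N + 1) * Real.log^[k] x := by
        by_cases h : ((n : ℝ) + 2) ≤ Real.exp^[k] (2 * N)
        · have hcast : ((n + 2 : ℕ) : ℝ) = (n : ℝ) + 2 := by push_cast; ring
          have hκ : Real.log (kappa k N (n + 2)) = 2 * Real.log ((n : ℝ) + 2) := by
            rw [kappa, hcast, if_pos h, Real.log_pow]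
            norm_num
          have hlt : Real.log ((n : ℝ) + 2) ≤ Real.exp^[k - 1] (2 * N) := by
            have h1 : Real.log ((n : ℝ) + 2) ≤ Real.log (Real.exp^[k] (2 * N)) :=
              Real.log_le_log (by linarith) h
            rwa [iterate_succ_pred hk (2 * N), Real.log_exp] at h1
          have hsum0 : 0 ≤ ∑ i ∈ Finset.Ico 1 k, Real.log^[i] x := Finset.sum_nonneg hSnn
          have hlognn : 0 ≤ Real.log ((n : ℝ) + 2) := Real.log_nonneg (by linarith)
          have hND : 8 * Real.log ((n : ℝ) + 2) ≤ (N + 1) * Real.log^[k] x := by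
            have hD4 : 4 * Real.log ((n : ℝ) + 2) ≤ D := by rw [hD_def]; linarith
            have hLpos : (0 : ℝ) ≤ Real.log^[k] x := le_trans hD0.le hLk
            have h2L := mul_le_mul_of_nonneg_right (show (2:ℝ) ≤ N + 1 by linarith) hLpos
            linarith
          rw [hκ]
          linarith
        · push_neg at h
          rw [kappa_log_eq k hk N hN n h]
          have hxE : Real.exp^[k] (2 * N) ≤ (n : ℝ) + 2 := h.le
          have hchain : ∀ i ≤ k, 0 < Real.log^[i] ((n : ℝ) + 2) := fun i hi =>
            lt_of_lt_of_le (expIter_pos hN0 _) (expIter_le_logIter hN0 hi hxE)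
          have hsum : (∑ i ∈ Finset.Ico 1 k, Real.log^[i] ((n : ℝ) + 2)) ≤
              ∑ i ∈ Finset.Ico 1 k, Real.log^[i] x := by
            refine Finset.sum_le_sum fun i hi => ?_
            obtain ⟨hi1, hi2⟩ := Finset.mem_Ico.mp hi
            exact logIter_mono i (fun i' hi' => hchain i' (by omega)) hx3
          have hlk : Real.log^[k] ((n : ℝ) + 2) ≤ Real.log^[k] x :=
            logIter_mono k (fun i' hi' => hchain i' (by omega)) hx3
          have hmul := mul_le_mul_of_nonneg_left hlk (by linarith : (0 : ℝ) ≤ (N + 1) / 2)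
          linarith
      have hcast1 : ((n + 1 : ℕ) : ℝ) = (n : ℝ) + 1 := by push_cast; ring
      rw [hcast1]
      linarith
  intro j
  exact ⟨main j, hthresh j (main j)⟩
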